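/- There exists a constant C > 0 such that for all integers n ≥ 2, all integers j with 1 ≤ j ≤ n/2, and all integers p with 0 ≤ p ≤ n − 1, the quantity c_{np} = Σ_{k=p+1}^{n-1} e^{i(k−p)λ_j} / (k(k+1)) satisfies |c_{np}| ≤ C · min{ 1/max(p,1), n / (j · max(p,1)²) }, where λ_j = 2πj/n. -/

import Mathlib

open Finset

private lemma telescope_real (f : ℕ → ℝ) (p N : ℕ) (h : p ≤ N) :
    ∑ k ∈ Finset.Icc (p + 1) N, (f k - f (k + 1)) = f (p + 1) - f (N + 1) := by
  induction N with
  | zero =>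
    have hp : p = 0 := Nat.le_zero.mp h
    subst hp; simp
  | succ N ih =>
    rcases Nat.lt_or_ge p (N + 1) with h' | h'
    · have hpN : p ≤ N := Nat.lt_succ_iff.mp h'
      rw [Finset.sum_Icc_succ_top (by omega), ih hpN]; ring
    · have : p = N + 1 := le_antisymm h h'
      subst this
      rw [Finset.Icc_eq_empty (by omega)]; simp

private lemma abel_identity (z : ℂ) (b : ℕ → ℂ) (p N : ℕ) :
    ∑ k ∈ Finset.Icc (p + 1) N, z ^ (k - p) * b k
      = (∑ k ∈ Finset.Icc (p + 1) N,
            (∑ m ∈ Finset.Icc 1 (k - p), z ^ m) * (b k - b (k + 1)))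
        + (∑ m ∈ Finset.Icc 1 (N - p), z ^ m) * b (N + 1) := by
  induction N with
  | zero =>
    rw [Finset.Icc_eq_empty (by omega : ¬ p + 1 ≤ 0)]
    have h0 : (0 : ℕ) - p = 0 := by omega
    simp [h0]
  | succ N ih =>
    rcases Nat.lt_or_ge N p with h | h
    · have h1 : N + 1 - p = 0 := by omega
      have h2 : Finset.Icc (p + 1) (N + 1) = ∅ := Finset.Icc_eq_empty (by omega)
      rw [h2, h1]
      simp
    · rw [Finset.sum_Icc_succ_top (by omega), Finset.sum_Icc_succ_top (by omega), ih]
      have h1 : N + 1 - p = (N - p) + 1 := by omega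
      rw [h1, Finset.sum_Icc_succ_top (by omega : 1 ≤ N - p + 1)]
      ring

private lemma abel_bound (z : ℂ) (A : ℝ)
    (hA : ∀ M : ℕ, ‖∑ m ∈ Finset.Icc 1 M, z ^ m‖ ≤ A)
    (b : ℕ → ℝ) (hb0 : ∀ k, 0 ≤ b k) (hbm : ∀ k, b (k + 1) ≤ b k) (p N : ℕ) :
    ‖∑ k ∈ Finset.Icc (p + 1) N, z ^ (k - p) * (b k : ℂ)‖ ≤ A * b (p + 1) := by
  have hA0 : 0 ≤ A := le_trans (norm_nonneg _) (hA 0)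
  rcases Nat.lt_or_ge N (p + 1) with h | h
  · rw [Finset.Icc_eq_empty (by omega)]
    simpa using mul_nonneg hA0 (hb0 (p + 1))
  · have hpN : p ≤ N := by omega
    rw [abel_identity]
    have step1 : ‖∑ k ∈ Finset.Icc (p + 1) N,
        (∑ m ∈ Finset.Icc 1 (k - p), z ^ m) * (((b k : ℝ) : ℂ) - ((b (k + 1) : ℝ) : ℂ))‖
        ≤ ∑ k ∈ Finset.Icc (p + 1) N, A * (b k - b (k + 1)) := by
      refine le_trans (norm_sum_le _ _) (Finset.sum_le_sum ?_)
      intro k _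
      rw [norm_mul]
      have h1 : ‖((b k : ℝ) : ℂ) - ((b (k + 1) : ℝ) : ℂ)‖ = b k - b (k + 1) := by
        rw [← Complex.ofReal_sub, Complex.norm_real, Real.norm_eq_abs, abs_of_nonneg (by linarith [hbm k])]
      rw [h1]
      exact mul_le_mul_of_nonneg_right (hA _) (by linarith [hbm k])
    have step2 : ‖(∑ m ∈ Finset.Icc 1 (N - p), z ^ m) * ((b (N + 1) : ℝ) : ℂ)‖
        ≤ A * b (N + 1) := by
      rw [norm_mul, Complex.norm_real, Real.norm_eq_abs, abs_of_nonneg (hb0 _)]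
      exact mul_le_mul_of_nonneg_right (hA _) (hb0 _)
    calc ‖_‖ ≤ _ + _ := norm_add_le _ _
      _ ≤ (∑ k ∈ Finset.Icc (p + 1) N, A * (b k - b (k + 1))) + A * b (N + 1) :=
          add_le_add step1 step2
      _ = A * b (p + 1) := by
          rw [← Finset.mul_sum, telescope_real b p N hpN]; ring

set_option maxHeartbeats 1000000 in
theorem second_difference_coefficient_bound :
    ∃ C > 0, ∀ n : ℕ, 2 ≤ n → ∀ j : ℕ, 1 ≤ j → (j : ℝ) ≤ (n : ℝ) / 2 →
      ∀ p : ℕ, p ≤ n - 1 →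
        ‖(∑ k ∈ Finset.Icc (p + 1) (n - 1),
            Complex.exp (Complex.I * ((k : ℂ) - (p : ℂ)) * ((2 * Real.pi * j / n : ℝ) : ℂ)) /
              ((k : ℂ) * ((k : ℂ) + 1)))‖ ≤
          C * min (1 / max (p : ℝ) 1) ((n : ℝ) / (j * (max (p : ℝ) 1) ^ 2)) := by
  refine ⟨1, one_pos, fun n hn j hj hjn p hp => ?_⟩
  have hπ := Real.pi_pos
  have hn0 : (0 : ℝ) < n := by positivity
  have hj0 : (0 : ℝ) < j := by exact_mod_cast hj
  have hjR : (1 : ℝ) ≤ j := by exact_mod_cast hj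
  set lam : ℝ := 2 * Real.pi * j / n with hlam
  set z : ℂ := Complex.exp ((lam : ℂ) * Complex.I) with hz
  set b : ℕ → ℝ := fun k => 1 / (max (k : ℝ) 1 * ((k : ℝ) + 1)) with hb
  -- rewrite the sum
  have hsum : (∑ k ∈ Finset.Icc (p + 1) (n - 1),
      Complex.exp (Complex.I * ((k : ℂ) - (p : ℂ)) * ((lam : ℝ) : ℂ)) /
        ((k : ℂ) * ((k : ℂ) + 1)))
      = ∑ k ∈ Finset.Icc (p + 1) (n - 1), z ^ (k - p) * ((b k : ℝ) : ℂ) := by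
    refine Finset.sum_congr rfl fun k hk => ?_
    have hk1 : p + 1 ≤ k := (Finset.mem_Icc.mp hk).1
    have hkp : p ≤ k := by omega
    have hk1' : 1 ≤ k := by omega
    have hkR : (1 : ℝ) ≤ (k : ℝ) := by exact_mod_cast hk1'
    have hkC : ((k : ℂ)) ≠ 0 := by
      exact_mod_cast Nat.cast_ne_zero.mpr (by omega)
    have hexp : Complex.exp (Complex.I * ((k : ℂ) - (p : ℂ)) * ((lam : ℝ) : ℂ)) = z ^ (k - p) := by
      rw [show ((k : ℂ) - (p : ℂ)) = ((k - p : ℕ) : ℂ) by rw [Nat.cast_sub hkp],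
        hz, ← Complex.exp_nat_mul]
      ring_nf
    have hmax : max (k : ℝ) 1 = (k : ℝ) := max_eq_left hkR
    have hbk : ((b k : ℝ) : ℂ) = 1 / ((k : ℂ) * ((k : ℂ) + 1)) := by
      rw [hb]; simp only [hmax]; push_cast; ring
    rw [hexp, hbk, div_eq_mul_one_div]
  rw [hsum]
  -- properties of b
  have hb0 : ∀ k, 0 ≤ b k := by
    intro k; rw [hb]; positivity
  have hbm : ∀ k, b (k + 1) ≤ b k := by
    intro k
    have hk0 : (0 : ℝ) ≤ (k : ℝ) := Nat.cast_nonneg k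
    have hk1 : (1 : ℝ) ≤ (k : ℝ) + 1 := by linarith
    have e1 : b (k + 1) = 1 / (((k : ℝ) + 1) * ((k : ℝ) + 1 + 1)) := by
      rw [hb]; push_cast; rw [max_eq_left hk1]
    rw [e1, hb]
    refine one_div_le_one_div_of_le (by positivity) ?_
    have hmle : max (k : ℝ) 1 ≤ (k : ℝ) + 1 := max_le (by linarith) (by linarith)
    nlinarith [hmle, hk0]
  -- |z| = 1
  have habs_z : ‖z‖ = 1 := Complex.norm_exp_ofReal_mul_I lam
  have hlam_pos : 0 < lam := by rw [hlam]; positivity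
  have hlam_pi : lam ≤ Real.pi := by
    rw [hlam, div_le_iff₀ hn0]
    nlinarith [hjn]
  -- lower bound on |z - 1|
  have hz1 : 4 * (j : ℝ) / n ≤ ‖z - 1‖ := by
    have hsq : (‖z - 1‖) ^ 2 = 2 - 2 * Real.cos lam := by
      rw [Complex.sq_norm, Complex.normSq_apply]
      simp only [Complex.sub_re, Complex.sub_im, Complex.one_re, Complex.one_im, hz,
        Complex.exp_ofReal_mul_I_re, Complex.exp_ofReal_mul_I_im]
      nlinarith [Real.sin_sq_add_cos_sq lam]
    have hcos : Real.cos lam ≤ 1 - 2 / Real.pi ^ 2 * lam ^ 2 :=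
      Real.cos_le_one_sub_mul_cos_sq (by rw [abs_of_pos hlam_pos]; exact hlam_pi)
    have hid : 2 / Real.pi ^ 2 * lam ^ 2 * 2 = (4 * (j : ℝ) / n) ^ 2 := by
      rw [hlam]; field_simp; ring
    have h4 : (4 * (j : ℝ) / n) ^ 2 ≤ (‖z - 1‖) ^ 2 := by
      rw [hsq]; nlinarith [hcos, hid]
    have h5 := Real.sqrt_le_sqrt h4
    rwa [Real.sqrt_sq (by positivity), Real.sqrt_sq (norm_nonneg _)] at h5
  have hz1pos : 0 < ‖z - 1‖ :=
    lt_of_lt_of_le (div_pos (by linarith) hn0) hz1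
  -- partial geometric sums bound
  set A : ℝ := (n : ℝ) / (2 * j) with hA_def
  have hA : ∀ M : ℕ, ‖∑ m ∈ Finset.Icc 1 M, z ^ m‖ ≤ A := by
    intro M
    have hG : (∑ m ∈ Finset.Icc 1 M, z ^ m) * (z - 1) = z * (z ^ M - 1) := by
      rw [show Finset.Icc 1 M = Finset.Ico 1 (M + 1) by rw [Finset.Ico_add_one_right_eq_Icc],
        Finset.sum_Ico_eq_sum_range]
      simp only [Nat.add_sub_cancel]
      have e : ∀ k ∈ Finset.range M, z ^ (1 + k) = z * z ^ k := by
        intro k _; rw [pow_add, pow_one]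
      rw [Finset.sum_congr rfl e, ← Finset.mul_sum, mul_assoc, geom_sum_mul]
    have h2 : ‖∑ m ∈ Finset.Icc 1 M, z ^ m‖ * ‖z - 1‖ ≤ 2 := by
      rw [← norm_mul, hG, norm_mul, habs_z, one_mul]
      calc ‖z ^ M - 1‖ = ‖z ^ M - 1‖ := rfl
        _ ≤ ‖z ^ M‖ + ‖(1 : ℂ)‖ := norm_sub_le _ _
        _ = 2 := by
            simp [norm_pow, habs_z]
            norm_num
    have h3 : ‖∑ m ∈ Finset.Icc 1 M, z ^ m‖ ≤ 2 / ‖z - 1‖ :=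
      (le_div_iff₀ hz1pos).mpr h2
    refine h3.trans ?_
    have h6 : 2 / ‖z - 1‖ ≤ 2 / (4 * (j : ℝ) / n) :=
      div_le_div_of_nonneg_left (by norm_num) (div_pos (by linarith) hn0) hz1
    refine h6.trans_eq ?_
    rw [hA_def]; field_simp; ring
  -- the two bounds
  have habel := abel_bound z A hA b hb0 hbm p (n - 1)
  have hbp1 : b (p + 1) = 1 / (((p : ℝ) + 1) * ((p : ℝ) + 2)) := by
    rw [hb]
    have h1 : (1 : ℝ) ≤ (p : ℝ) + 1 := by
      have := Nat.cast_nonneg (α := ℝ) p; linarith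
    push_cast
    rw [max_eq_left h1]
    ring_nf
  -- triangle inequality bound
  have htri : ‖∑ k ∈ Finset.Icc (p + 1) (n - 1), z ^ (k - p) * ((b k : ℝ) : ℂ)‖
      ≤ 1 / ((p : ℝ) + 1) := by
    refine le_trans (norm_sum_le _ _) ?_
    have hterm : ∀ k ∈ Finset.Icc (p + 1) (n - 1),
        ‖z ^ (k - p) * ((b k : ℝ) : ℂ)‖ = (1 / (k : ℝ)) - 1 / ((k : ℝ) + 1) := by
      intro k hk
      have hk1 : 1 ≤ k := by have := (Finset.mem_Icc.mp hk).1; omega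
      have hkR : (1 : ℝ) ≤ (k : ℝ) := by exact_mod_cast hk1
      rw [norm_mul, norm_pow, habs_z, one_pow, one_mul, Complex.norm_real, Real.norm_eq_abs,
        abs_of_nonneg (hb0 k)]
      simp only [hb]
      rw [max_eq_left hkR]
      have hk0 : (k : ℝ) ≠ 0 := by positivity
      field_simp
      ring
    rw [Finset.sum_congr rfl hterm]
    have ht := telescope_real (fun k => 1 / (k : ℝ)) p (n - 1) hp
    have hcast : ∀ k ∈ Finset.Icc (p + 1) (n - 1),
        (1 / (k : ℝ)) - 1 / ((k : ℝ) + 1) = (1 / (k : ℝ)) - 1 / (((k + 1 : ℕ) : ℝ)) := by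
      intro k _; push_cast; ring
    rw [Finset.sum_congr rfl hcast, ht]
    have : (0 : ℝ) ≤ 1 / (((n - 1 + 1 : ℕ)) : ℝ) := by positivity
    have hpc : ((p + 1 : ℕ) : ℝ) = (p : ℝ) + 1 := by push_cast; ring
    rw [hpc] at *
    linarith [this]
  -- conclude
  rw [one_mul]
  set q : ℝ := max (p : ℝ) 1 with hq
  have hq1 : (1 : ℝ) ≤ q := le_max_right _ _
  have hq0 : (0 : ℝ) < q := by linarith
  have hqp : q ≤ (p : ℝ) + 1 := max_le (by linarith [Nat.cast_nonneg (α := ℝ) p]) (by linarith [Nat.cast_nonneg (α := ℝ) p])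
  refine le_min ?_ ?_
  · refine htri.trans ?_
    exact one_div_le_one_div_of_le hq0 hqp
  · refine habel.trans ?_
    rw [hbp1, hA_def]
    rw [div_mul_div_comm, mul_one]
    refine div_le_div_of_nonneg_left (by positivity) (mul_pos hj0 (by positivity)) ?_
    have hp0 : (0 : ℝ) ≤ (p : ℝ) := Nat.cast_nonneg p
    have h1 : q ^ 2 ≤ ((p : ℝ) + 1) * ((p : ℝ) + 2) := by nlinarith
    have h2 : (j : ℝ) * q ^ 2 ≤ (j : ℝ) * (((p : ℝ) + 1) * ((p : ℝ) + 2)) :=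
      mul_le_mul_of_nonneg_left h1 hj0.le
    have h3 : (0 : ℝ) ≤ (j : ℝ) * (((p : ℝ) + 1) * ((p : ℝ) + 2)) := by positivity
    linarith [h2, h3]
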